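/- Let h₁, h₂ be polynomials in y with coefficients that are (possibly fractional) power series in x, and let τ be a positive rational. If jac(in_τ(h₁), in_τ(h₂)) ≠ 0, then in_τ(jac(h₁,h₂)) = jac(in_τ(h₁), in_τ(h₂)). -/

import Mathlib

noncomputable section

open Polynomial

/-- Polynomials in `y` with fractional power series (Hahn series with rational exponents)
coefficients in `x`. -/
abbrev FracPoly := Polynomial (HahnSeries ℚ ℂ)

/-- The set of weights `i + τ·j` (as real numbers) of the monomials `x^i y^j` appearing
in `g`. -/
def wSupp (τ : ℚ) (g : FracPoly) : Set ℝ :=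
  {r | ∃ j : ℕ, ∃ i ∈ (g.coeff j).support, r = (i : ℝ) + (τ : ℝ) * j}

/-- The weighted order `ord_τ(g) = min { i + τ·j : a_{ij} ≠ 0 }` (with weights `w(x)=1`,
`w(y)=τ`), computed as an infimum of real numbers. -/
def ordT (τ : ℚ) (g : FracPoly) : ℝ := sInf (wSupp τ g)

/-- Truncation of a Hahn series retaining only the exponents `i` with `i + τ·j = r`. -/
def truncAt (τ : ℚ) (r : ℝ) (j : ℕ) (a : HahnSeries ℚ ℂ) : HahnSeries ℚ ℂ where
  coeff i := if ((i : ℝ) + (τ : ℝ) * j = r) then a.coeff i else 0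
  isPWO_support' := a.isPWO_support.mono (by
    intro i hi
    simp only [Function.mem_support] at hi
    by_cases h : ((i : ℝ) + (τ : ℝ) * j = r) <;> simp [h] at hi
    exact hi)

/-- The weighted initial part `in_τ(g) = Σ_{i+τj = ord_τ(g)} a_{ij} x^i y^j`. -/
def inT (τ : ℚ) (g : FracPoly) : FracPoly :=
  g.sum fun j a => Polynomial.C (truncAt τ (ordT τ g) j a) * Polynomial.X ^ j

/-- Multiplication of the coefficients of a Hahn series by their exponent:
`Σ aᵢ xⁱ ↦ Σ i·aᵢ xⁱ`. -/
def expMul (a : HahnSeries ℚ ℂ) : HahnSeries ℚ ℂ where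
  coeff i := (i : ℂ) * a.coeff i
  isPWO_support' := a.isPWO_support.mono (by
    intro i hi
    simp only [Function.mem_support] at hi ⊢
    intro h
    simp [h] at hi)

/-- The partial derivative `∂/∂x` on Hahn series: `Σ aᵢ xⁱ ↦ Σ i·aᵢ x^{i-1}`. -/
def derivX (a : HahnSeries ℚ ℂ) : HahnSeries ℚ ℂ :=
  HahnSeries.embDomain (OrderIso.addRight (-1 : ℚ)).toOrderEmbedding (expMul a)

/-- The partial derivative `∂/∂x` applied coefficientwise to a polynomial in `y` with
fractional power series coefficients. -/
def pderivX (h : FracPoly) : FracPoly :=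
  h.sum fun n a => Polynomial.C (derivX a) * Polynomial.X ^ n

/-- The Jacobian determinant `jac(f,g) = f_x g_y − f_y g_x`. -/
def jacF (f g : FracPoly) : FracPoly :=
  pderivX f * Polynomial.derivative g - Polynomial.derivative f * pderivX g

/-! ### Auxiliary lemmas -/


lemma sumCX_coeff (g : FracPoly) (F : ℕ → HahnSeries ℚ ℂ → HahnSeries ℚ ℂ)
    (hF : ∀ n, F n 0 = 0) (n : ℕ) :
    (g.sum fun j a => Polynomial.C (F j a) * Polynomial.X ^ j).coeff n = F n (g.coeff n) := by
  rw [Polynomial.sum_def, Polynomial.finset_sum_coeff]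
  simp only [Polynomial.coeff_C_mul, Polynomial.coeff_X_pow, mul_ite, mul_one, mul_zero]
  rw [Finset.sum_ite_eq]
  split_ifs with h
  · rfl
  · rw [Polynomial.notMem_support_iff.mp h, hF]

lemma truncAt_zero (τ : ℚ) (r : ℝ) (j : ℕ) : truncAt τ r j 0 = 0 := by
  ext i
  simp [truncAt, HahnSeries.coeff_zero]

lemma inT_coeff (τ : ℚ) (g : FracPoly) (n : ℕ) :
    (inT τ g).coeff n = truncAt τ (ordT τ g) n (g.coeff n) :=
  sumCX_coeff g _ (fun n => truncAt_zero τ _ n) n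

lemma truncAt_coeff (τ : ℚ) (r : ℝ) (j : ℕ) (a : HahnSeries ℚ ℂ) (i : ℚ) :
    (truncAt τ r j a).coeff i = if ((i : ℝ) + (τ : ℝ) * j = r) then a.coeff i else 0 := rfl

lemma derivX_zero : derivX 0 = 0 := by
  have : expMul 0 = 0 := by ext i; simp [expMul]
  simp [derivX, this]

lemma pderivX_coeff (h : FracPoly) (n : ℕ) :
    (pderivX h).coeff n = derivX (h.coeff n) :=
  sumCX_coeff h _ (fun _ => derivX_zero) n

lemma derivX_coeff (a : HahnSeries ℚ ℂ) (i : ℚ) :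
    (derivX a).coeff i = ((i + 1 : ℚ) : ℂ) * a.coeff (i + 1) := by
  have h : (OrderIso.addRight (-1 : ℚ)).toOrderEmbedding (i + 1) = i := by simp
  conv_lhs => rw [derivX, ← h, HahnSeries.embDomain_coeff]
  rfl

lemma derivX_add (a b : HahnSeries ℚ ℂ) : derivX (a + b) = derivX a + derivX b := by
  ext i
  simp only [derivX_coeff, HahnSeries.coeff_add]
  ring

lemma pderivX_add (f g : FracPoly) : pderivX (f + g) = pderivX f + pderivX g := by
  apply Polynomial.ext
  intro n
  simp only [pderivX_coeff, Polynomial.coeff_add, derivX_add]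

lemma derivY_coeff_ne {g : FracPoly} {n : ℕ} {i : ℚ}
    (h : ((Polynomial.derivative g).coeff n).coeff i ≠ 0) :
    (g.coeff (n + 1)).coeff i ≠ 0 := by
  rw [Polynomial.coeff_derivative] at h
  intro h0
  apply h
  have hc : ((n : HahnSeries ℚ ℂ) + 1) = HahnSeries.single (0 : ℚ) ((n : ℂ) + 1) := by
    rw [← HahnSeries.C_apply, map_add, map_natCast, map_one]
  rw [hc, HahnSeries.coeff_mul_single_zero, h0, zero_mul]

lemma mul_coeff_ne {f g : FracPoly} {n : ℕ} {i : ℚ}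
    (h : ((f * g).coeff n).coeff i ≠ 0) :
    ∃ n₁ n₂ : ℕ, ∃ i₁ i₂ : ℚ, n₁ + n₂ = n ∧ i₁ + i₂ = i ∧
      (f.coeff n₁).coeff i₁ ≠ 0 ∧ (g.coeff n₂).coeff i₂ ≠ 0 := by
  rw [Polynomial.coeff_mul] at h
  rw [show ((∑ p ∈ Finset.HasAntidiagonal.antidiagonal n, f.coeff p.1 * g.coeff p.2).coeff i)
      = ∑ p ∈ Finset.HasAntidiagonal.antidiagonal n, (f.coeff p.1 * g.coeff p.2).coeff i from
      map_sum (HahnSeries.coeff.addMonoidHom i) _ _] at h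
  obtain ⟨p, hp, hp0⟩ := Finset.exists_ne_zero_of_sum_ne_zero h
  rw [HahnSeries.coeff_mul] at hp0
  obtain ⟨q, hq, hq0⟩ := Finset.exists_ne_zero_of_sum_ne_zero hp0
  rw [Finset.mem_addAntidiagonal] at hq
  exact ⟨p.1, p.2, q.1, q.2, Finset.HasAntidiagonal.mem_antidiagonal.mp hp, hq.2.2,
    left_ne_zero_of_mul hq0, right_ne_zero_of_mul hq0⟩

/-- All weights equal `r` (weighted homogeneous of weight `r`, or zero). -/
def Hom (τ : ℚ) (r : ℝ) (g : FracPoly) : Prop :=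
  ∀ j : ℕ, ∀ i : ℚ, (g.coeff j).coeff i ≠ 0 → (i : ℝ) + (τ : ℝ) * j = r

/-- All weights strictly greater than `r`. -/
def Abv (τ : ℚ) (r : ℝ) (g : FracPoly) : Prop :=
  ∀ j : ℕ, ∀ i : ℚ, (g.coeff j).coeff i ≠ 0 → r < (i : ℝ) + (τ : ℝ) * j

lemma Hom.of_eq {τ : ℚ} {r r' : ℝ} {g : FracPoly} (h : Hom τ r g) (e : r = r') : Hom τ r' g :=
  e ▸ h

lemma Abv.of_eq {τ : ℚ} {r r' : ℝ} {g : FracPoly} (h : Abv τ r g) (e : r = r') : Abv τ r' g :=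
  e ▸ h

lemma Hom.mul {τ : ℚ} {r s : ℝ} {f g : FracPoly} (hf : Hom τ r f) (hg : Hom τ s g) :
    Hom τ (r + s) (f * g) := by
  intro n i h
  obtain ⟨n₁, n₂, i₁, i₂, hn, hi, h₁, h₂⟩ := mul_coeff_ne h
  have e₁ := hf n₁ i₁ h₁
  have e₂ := hg n₂ i₂ h₂
  subst hn hi
  push_cast
  push_cast at e₁ e₂
  linarith

lemma Hom.mul_abv {τ : ℚ} {r s : ℝ} {f g : FracPoly} (hf : Hom τ r f) (hg : Abv τ s g) :
    Abv τ (r + s) (f * g) := by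
  intro n i h
  obtain ⟨n₁, n₂, i₁, i₂, hn, hi, h₁, h₂⟩ := mul_coeff_ne h
  have e₁ := hf n₁ i₁ h₁
  have e₂ := hg n₂ i₂ h₂
  subst hn hi
  push_cast
  push_cast at e₁ e₂
  linarith

lemma Abv.mul_hom {τ : ℚ} {r s : ℝ} {f g : FracPoly} (hf : Abv τ r f) (hg : Hom τ s g) :
    Abv τ (r + s) (f * g) := by
  intro n i h
  obtain ⟨n₁, n₂, i₁, i₂, hn, hi, h₁, h₂⟩ := mul_coeff_ne h
  have e₁ := hf n₁ i₁ h₁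
  have e₂ := hg n₂ i₂ h₂
  subst hn hi
  push_cast
  push_cast at e₁ e₂
  linarith

lemma Abv.mul {τ : ℚ} {r s : ℝ} {f g : FracPoly} (hf : Abv τ r f) (hg : Abv τ s g) :
    Abv τ (r + s) (f * g) := by
  intro n i h
  obtain ⟨n₁, n₂, i₁, i₂, hn, hi, h₁, h₂⟩ := mul_coeff_ne h
  have e₁ := hf n₁ i₁ h₁
  have e₂ := hg n₂ i₂ h₂
  subst hn hi
  push_cast
  push_cast at e₁ e₂
  linarith

lemma Hom.sub {τ : ℚ} {r : ℝ} {f g : FracPoly} (hf : Hom τ r f) (hg : Hom τ r g) :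
    Hom τ r (f - g) := by
  intro n i h
  rw [Polynomial.coeff_sub, HahnSeries.coeff_sub] at h
  rcases ne_or_eq ((f.coeff n).coeff i) 0 with h' | h'
  · exact hf n i h'
  · exact hg n i (by intro h''; rw [h', h''] at h; simp at h)

lemma Abv.sub {τ : ℚ} {r : ℝ} {f g : FracPoly} (hf : Abv τ r f) (hg : Abv τ r g) :
    Abv τ r (f - g) := by
  intro n i h
  rw [Polynomial.coeff_sub, HahnSeries.coeff_sub] at h
  rcases ne_or_eq ((f.coeff n).coeff i) 0 with h' | h'
  · exact hf n i h'
  · exact hg n i (by intro h''; rw [h', h''] at h; simp at h)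

lemma Abv.add {τ : ℚ} {r : ℝ} {f g : FracPoly} (hf : Abv τ r f) (hg : Abv τ r g) :
    Abv τ r (f + g) := by
  intro n i h
  rw [Polynomial.coeff_add, HahnSeries.coeff_add] at h
  rcases ne_or_eq ((f.coeff n).coeff i) 0 with h' | h'
  · exact hf n i h'
  · exact hg n i (by intro h''; rw [h', h''] at h; simp at h)

lemma Hom.pderivX {τ : ℚ} {r : ℝ} {f : FracPoly} (hf : Hom τ r f) :
    Hom τ (r - 1) (pderivX f) := by
  intro n i h
  rw [pderivX_coeff, derivX_coeff] at h
  have := hf n (i + 1) (right_ne_zero_of_mul h)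
  push_cast at this ⊢
  linarith

lemma Abv.pderivX {τ : ℚ} {r : ℝ} {f : FracPoly} (hf : Abv τ r f) :
    Abv τ (r - 1) (pderivX f) := by
  intro n i h
  rw [pderivX_coeff, derivX_coeff] at h
  have := hf n (i + 1) (right_ne_zero_of_mul h)
  push_cast at this ⊢
  linarith

lemma Hom.derivY {τ : ℚ} {r : ℝ} {f : FracPoly} (hf : Hom τ r f) :
    Hom τ (r - τ) (Polynomial.derivative f) := by
  intro n i h
  have := hf (n + 1) i (derivY_coeff_ne h)
  push_cast at this ⊢
  linarith

lemma Abv.derivY {τ : ℚ} {r : ℝ} {f : FracPoly} (hf : Abv τ r f) :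
    Abv τ (r - τ) (Polynomial.derivative f) := by
  intro n i h
  have := hf (n + 1) i (derivY_coeff_ne h)
  push_cast at this ⊢
  linarith

lemma Hom.jac {τ : ℚ} {r s : ℝ} {f g : FracPoly} (hf : Hom τ r f) (hg : Hom τ s g) :
    Hom τ (r + s - 1 - τ) (jacF f g) := by
  unfold jacF
  exact (hf.pderivX.mul hg.derivY |>.of_eq (by ring)).sub
    (hf.derivY.mul hg.pderivX |>.of_eq (by ring))

lemma Hom.jac_abv {τ : ℚ} {r s : ℝ} {f g : FracPoly} (hf : Hom τ r f) (hg : Abv τ s g) :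
    Abv τ (r + s - 1 - τ) (jacF f g) := by
  unfold jacF
  exact (hf.pderivX.mul_abv hg.derivY |>.of_eq (by ring)).sub
    (hf.derivY.mul_abv hg.pderivX |>.of_eq (by ring))

lemma Abv.jac_hom {τ : ℚ} {r s : ℝ} {f g : FracPoly} (hf : Abv τ r f) (hg : Hom τ s g) :
    Abv τ (r + s - 1 - τ) (jacF f g) := by
  unfold jacF
  exact (hf.pderivX.mul_hom hg.derivY |>.of_eq (by ring)).sub
    (hf.derivY.mul_hom hg.pderivX |>.of_eq (by ring))

lemma Abv.jac {τ : ℚ} {r s : ℝ} {f g : FracPoly} (hf : Abv τ r f) (hg : Abv τ s g) :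
    Abv τ (r + s - 1 - τ) (jacF f g) := by
  unfold jacF
  exact (hf.pderivX.mul hg.derivY |>.of_eq (by ring)).sub
    (hf.derivY.mul hg.pderivX |>.of_eq (by ring))

/-- Key recognition lemma: if `g = H + T` with `H` homogeneous of weight `r`, nonzero, and
`T` strictly above `r`, then `inT τ g = H`. -/
lemma inT_eq_of_decomp (τ : ℚ) (H T : FracPoly) (r : ℝ)
    (hH : Hom τ r H) (hT : Abv τ r T) (hH0 : H ≠ 0) : inT τ (H + T) = H := by
  have hord : ordT τ (H + T) = r := by
    apply IsLeast.csInf_eq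
    constructor
    · obtain ⟨j, hj⟩ : ∃ j, H.coeff j ≠ 0 := by
        by_contra h
        push_neg at h
        exact hH0 (Polynomial.ext fun n => by rw [h n, Polynomial.coeff_zero])
      obtain ⟨i, hi⟩ : ∃ i, (H.coeff j).coeff i ≠ 0 := by
        by_contra h
        push_neg at h
        exact hj (HahnSeries.ext (funext fun i => by rw [h i]; rfl))
      have hw : (i : ℝ) + (τ : ℝ) * j = r := hH j i hi
      refine ⟨j, i, ?_, hw.symm⟩
      rw [HahnSeries.mem_support, Polynomial.coeff_add, HahnSeries.coeff_add]
      have hTz : (T.coeff j).coeff i = 0 := by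
        by_contra hT0
        exact absurd hw (ne_of_gt (hT j i hT0))
      rw [hTz, add_zero]
      exact hi
    · rintro s ⟨j, i, hi, rfl⟩
      rw [HahnSeries.mem_support, Polynomial.coeff_add, HahnSeries.coeff_add] at hi
      rcases ne_or_eq ((H.coeff j).coeff i) 0 with h' | h'
      · exact le_of_eq (hH j i h').symm
      · rw [h', zero_add] at hi
        exact le_of_lt (hT j i hi)
  apply Polynomial.ext
  intro n
  apply HahnSeries.ext
  funext i
  rw [inT_coeff, hord, truncAt_coeff, Polynomial.coeff_add, HahnSeries.coeff_add]
  split_ifs with hw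
  · have hTz : (T.coeff n).coeff i = 0 := by
      by_contra hT0
      exact absurd hw (ne_of_gt (hT n i hT0))
    rw [hTz, add_zero]
  · rcases ne_or_eq ((H.coeff n).coeff i) 0 with h' | h'
    · exact absurd (hH n i h') hw
    · exact h'.symm

lemma Hom.inT (τ : ℚ) (g : FracPoly) : Hom τ (ordT τ g) (inT τ g) := by
  intro n i h
  rw [inT_coeff, truncAt_coeff] at h
  by_contra hw
  rw [if_neg hw] at h
  exact h rfl

lemma Abv.tail (τ : ℚ) (hτ : 0 < τ) (g : FracPoly)
    (hs : ∀ j : ℕ, ∀ i ∈ (g.coeff j).support, 0 ≤ i) :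
    Abv τ (ordT τ g) (g - inT τ g) := by
  have hbdd : BddBelow (wSupp τ g) := by
    refine ⟨0, ?_⟩
    rintro s ⟨j, i, hi, rfl⟩
    have h1 : (0 : ℝ) ≤ (i : ℝ) := by exact_mod_cast hs j i hi
    have h2 : (0 : ℝ) ≤ (τ : ℝ) * j := by positivity
    linarith
  intro n i h
  rw [Polynomial.coeff_sub, HahnSeries.coeff_sub, inT_coeff, truncAt_coeff] at h
  by_cases hw : (i : ℝ) + (τ : ℝ) * n = ordT τ g
  · rw [if_pos hw, sub_self] at h
    exact absurd rfl h
  · rw [if_neg hw, sub_zero] at h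
    have hmem : (i : ℝ) + (τ : ℝ) * n ∈ wSupp τ g := ⟨n, i, h, rfl⟩
    exact lt_of_le_of_ne (csInf_le hbdd hmem) (Ne.symm hw)


/-- If `jac(in_τ(h₁), in_τ(h₂)) ≠ 0`, then
`in_τ(jac(h₁,h₂)) = jac(in_τ(h₁), in_τ(h₂))` for polynomials in `y` whose coefficients
are fractional power series in `x` (nonnegative exponents). -/
theorem inT_jac (τ : ℚ) (hτ : 0 < τ) (h₁ h₂ : FracPoly)
    (hs₁ : ∀ j : ℕ, ∀ i ∈ (h₁.coeff j).support, 0 ≤ i)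
    (hs₂ : ∀ j : ℕ, ∀ i ∈ (h₂.coeff j).support, 0 ≤ i)
    (hne : jacF (inT τ h₁) (inT τ h₂) ≠ 0) :
    inT τ (jacF h₁ h₂) = jacF (inT τ h₁) (inT τ h₂) := by
  set r₁ := ordT τ h₁ with hr₁
  set r₂ := ordT τ h₂ with hr₂
  set H₁ := inT τ h₁ with hH₁
  set H₂ := inT τ h₂ with hH₂
  set T₁ := h₁ - H₁ with hT₁
  set T₂ := h₂ - H₂ with hT₂
  have hHom₁ : Hom τ r₁ H₁ := Hom.inT τ h₁
  have hHom₂ : Hom τ r₂ H₂ := Hom.inT τ h₂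
  have hAbv₁ : Abv τ r₁ T₁ := Abv.tail τ hτ h₁ hs₁
  have hAbv₂ : Abv τ r₂ T₂ := Abv.tail τ hτ h₂ hs₂
  have hd₁ : h₁ = H₁ + T₁ := by rw [hT₁]; ring
  have hd₂ : h₂ = H₂ + T₂ := by rw [hT₂]; ring
  set d := r₁ + r₂ - 1 - (τ : ℝ) with hd
  have hsplit : jacF h₁ h₂ = jacF H₁ H₂ + (jacF H₁ T₂ + (jacF T₁ H₂ + jacF T₁ T₂)) := by
    rw [hd₁, hd₂]
    unfold jacF
    rw [pderivX_add, pderivX_add, map_add, map_add]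
    ring
  have hHomJ : Hom τ d (jacF H₁ H₂) := hHom₁.jac hHom₂
  have hAbvE : Abv τ d (jacF H₁ T₂ + (jacF T₁ H₂ + jacF T₁ T₂)) :=
    (hHom₁.jac_abv hAbv₂).add ((hAbv₁.jac_hom hHom₂).add (hAbv₁.jac hAbv₂))
  rw [hsplit]
  exact inT_eq_of_decomp τ _ _ d hHomJ hAbvE hne

end
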